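/- For every integer k ≥ 2, h_k(ρ_k) > 0, hence Δ_k(ρ_k) > 0, and consequently ρ_k = 1/(1+√(8+8k)) < η_k < 1/√(8+8k). -/

import Mathlib

open Filter Set

/-- `C_k = (2k-2)!/(k-1)!` as a real number. -/
noncomputable def Cc (k : ℕ) : ℝ :=
  ((2 * k - 2).factorial : ℝ) / ((k - 1).factorial : ℝ)

/-- `p_k(z) = 1 − 2z − (7+8k)z²`. -/
noncomputable def Pp (k : ℕ) (z : ℝ) : ℝ := 1 - 2 * z - (7 + 8 * k) * z ^ 2

/-- `h_k(z) = 1 − z − C_k·z^{2k+1}`. -/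
noncomputable def Hh (k : ℕ) (z : ℝ) : ℝ := 1 - z - Cc k * z ^ (2 * k + 1)

/-- `Δ_k(z) = p_k(z) + 4·C_k·z^{2k+1}·h_k(z)`. -/
noncomputable def Dd (k : ℕ) (z : ℝ) : ℝ :=
  Pp k z + 4 * Cc k * z ^ (2 * k + 1) * Hh k z

/-- `g_k(z) = 2 − C_k·z^{2k−1}·(h_k(z) − C_k·z^{2k−1})`. -/
noncomputable def Gg (k : ℕ) (z : ℝ) : ℝ :=
  2 - Cc k * z ^ (2 * k - 1) * (Hh k z - Cc k * z ^ (2 * k - 1))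

/-- `ρ_k = 1/(1+√(8+8k))`, the positive root of `p_k`. -/
noncomputable def rho (k : ℕ) : ℝ := 1 / (1 + Real.sqrt (8 + 8 * k))

/-- `ψ_k(x) = −x·Δ_k′(x)`. -/
noncomputable def psi (k : ℕ) (x : ℝ) : ℝ := -x * deriv (Dd k) x

/-- `η` is a root of `Δ_k` in the interval `(0, 1/√(8+8k))`, and is the unique such root. -/
def IsEta (k : ℕ) (η : ℝ) : Prop :=
  η ∈ Set.Ioo (0 : ℝ) (1 / Real.sqrt (8 + 8 * k)) ∧ Dd k η = 0 ∧
    ∀ x ∈ Set.Ioo (0 : ℝ) (1 / Real.sqrt (8 + 8 * k)), Dd k x = 0 → x = η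

lemma Cc_pos (k : ℕ) : 0 < Cc k := by
  unfold Cc; positivity

lemma Cc_le (k : ℕ) (hk : 1 ≤ k) : Cc k ≤ (2 * (k:ℝ)) ^ (k - 1) := by
  induction k, hk using Nat.le_induction with
  | base => simp [Cc]
  | succ n hn ih =>
    obtain ⟨m, rfl⟩ : ∃ m, n = m + 1 := ⟨n - 1, by omega⟩
    have e1 : 2 * (m + 1 + 1) - 2 = 2 * m + 2 := by omega
    have e2 : m + 1 + 1 - 1 = m + 1 := by omega
    have e3 : 2 * (m + 1) - 2 = 2 * m := by omega
    have e4 : m + 1 - 1 = m := by omega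
    have f1 : ((2 * m + 2).factorial : ℝ)
        = (2 * m + 2) * ((2 * m + 1) * (2 * m).factorial) := by
      rw [Nat.factorial_succ, Nat.factorial_succ]; push_cast; ring
    have f2 : ((m + 1).factorial : ℝ) = (m + 1) * m.factorial := by
      rw [Nat.factorial_succ]; push_cast; ring
    have hCeq : Cc (m + 1 + 1) = 2 * (2 * (m:ℝ) + 1) * Cc (m + 1) := by
      unfold Cc
      rw [e1, e2, e3, e4, f1, f2]
      have h1 : ((m).factorial : ℝ) ≠ 0 := by positivity
      have h2 : ((m:ℝ) + 1) ≠ 0 := by positivity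
      field_simp
    rw [hCeq]
    set N : ℝ := (m : ℝ) + 1 with hN
    have hN1 : (1:ℝ) ≤ N := by
      rw [hN]
      have h0 : (0:ℝ) ≤ (m:ℝ) := Nat.cast_nonneg m
      linarith
    have hNpos : (0:ℝ) < N := by linarith
    have hnn : (0:ℝ) ≤ 1 / N := by positivity
    have hb : (2:ℝ) ≤ (1 + 1 / N) ^ (m + 1) := by
      have h := one_add_mul_le_pow (a := 1 / N) (by linarith) (m + 1)
      have hc : ((m + 1 : ℕ) : ℝ) = N := by rw [hN]; push_cast; ring
      rw [hc, mul_one_div, div_self hNpos.ne'] at h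
      linarith
    have h2n : (0:ℝ) < (2 * N) ^ (m + 1) := by positivity
    have hpow : 2 * (2 * N) ^ (m + 1) ≤ (2 * (N + 1)) ^ (m + 1) := by
      have heq : (2 * (N + 1)) = (2 * N) * (1 + 1 / N) := by field_simp
      have hmm := mul_le_mul_of_nonneg_left hb (le_of_lt h2n)
      calc 2 * (2 * N) ^ (m + 1) = (2 * N) ^ (m + 1) * 2 := by ring
        _ ≤ (2 * N) ^ (m + 1) * (1 + 1 / N) ^ (m + 1) := hmm
        _ = ((2 * N) * (1 + 1 / N)) ^ (m + 1) := (mul_pow _ _ _).symm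
        _ = (2 * (N + 1)) ^ (m + 1) := by rw [← heq]
    have ih' : Cc (m + 1) ≤ (2 * N) ^ m := by
      have h := ih
      rw [e4] at h
      push_cast at h
      exact h
    have hstep : 2 * (2 * N - 1) * Cc (m + 1) ≤ 2 * (2 * N - 1) * (2 * N) ^ m := by
      apply mul_le_mul_of_nonneg_left ih'
      linarith
    have hpowsplit : (2 * N) ^ (m + 1) = (2 * N) ^ m * (2 * N) := by
      rw [pow_succ]
    have hmid : 2 * (2 * N - 1) * (2 * N) ^ m ≤ 2 * (2 * N) ^ (m + 1) := by
      rw [hpowsplit]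
      have hp : (0:ℝ) ≤ (2 * N) ^ m := by positivity
      nlinarith
    have hfin : 2 * (2 * (m:ℝ) + 1) * Cc (m + 1) ≤ (2 * ((m:ℝ) + 1 + 1)) ^ (m + 1) := by
      have : 2 * (2 * (m:ℝ) + 1) ≤ 2 * (2 * N - 1) := by rw [hN]; ring_nf; linarith
      have hCp := (Cc_pos (m + 1)).le
      calc 2 * (2 * (m:ℝ) + 1) * Cc (m + 1) ≤ 2 * (2 * N - 1) * Cc (m + 1) :=
            mul_le_mul_of_nonneg_right this hCp
        _ ≤ 2 * (2 * N - 1) * (2 * N) ^ m := hstep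
        _ ≤ 2 * (2 * N) ^ (m + 1) := hmid
        _ ≤ (2 * (N + 1)) ^ (m + 1) := hpow
        _ = (2 * ((m:ℝ) + 1 + 1)) ^ (m + 1) := rfl
    calc 2 * (2 * (m:ℝ) + 1) * Cc (m + 1) ≤ (2 * ((m:ℝ) + 1 + 1)) ^ (m + 1) := hfin
      _ = (2 * ((m + 1 + 1 : ℕ) : ℝ)) ^ (m + 1 + 1 - 1) := by push_cast; ring

lemma key (k : ℕ) (hk : 2 ≤ k) {x : ℝ} (hx0 : 0 ≤ x) (hx : x ^ 2 ≤ 1 / (8 + 8 * (k:ℝ))) :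
    Cc k * x ^ (2 * k + 1) ≤ (1/4) * x ^ 3 := by
  have hK : (2:ℝ) ≤ (k:ℝ) := by exact_mod_cast hk
  have hs : (0:ℝ) < 8 + 8 * (k:ℝ) := by linarith
  have h2 : 2 * (k:ℝ) * x ^ 2 ≤ 1 / 4 := by
    have h1 : 2 * (k:ℝ) * x ^ 2 ≤ 2 * k * (1 / (8 + 8 * k)) := by
      exact mul_le_mul_of_nonneg_left hx (by linarith)
    have h2' : 2 * (k:ℝ) * (1 / (8 + 8 * k)) ≤ 1 / 4 := by
      rw [mul_one_div, div_le_div_iff₀ hs (by norm_num)]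
      linarith
    linarith
  have hsplit : x ^ (2 * k + 1) = (x ^ 2) ^ (k - 1) * x ^ 3 := by
    rw [← pow_mul, ← pow_add]
    congr 1
    omega
  rw [hsplit, ← mul_assoc]
  have hx3 : (0:ℝ) ≤ x ^ 3 := by positivity
  have hmain : Cc k * (x ^ 2) ^ (k - 1) ≤ 1 / 4 := by
    have hC := Cc_le k (by omega)
    have h3 : Cc k * (x ^ 2) ^ (k - 1) ≤ (2 * (k:ℝ)) ^ (k - 1) * (x ^ 2) ^ (k - 1) :=
      mul_le_mul_of_nonneg_right hC (by positivity)
    rw [← mul_pow] at h3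
    have h4 : (2 * (k:ℝ) * x ^ 2) ^ (k - 1) ≤ (1/4 : ℝ) ^ (k - 1) :=
      pow_le_pow_left₀ (by positivity) h2 _
    have h5 : ((1:ℝ)/4) ^ (k - 1) ≤ (1/4 : ℝ) ^ 1 :=
      pow_le_pow_of_le_one (by norm_num) (by norm_num) (by omega)
    rw [pow_one] at h5
    linarith
  exact mul_le_mul_of_nonneg_right hmain hx3

set_option maxHeartbeats 1600000 in
/-- For every integer `k ≥ 2`, `h_k(ρ_k) > 0`, hence `Δ_k(ρ_k) > 0`, and
consequently `ρ_k = 1/(1+√(8+8k)) < η_k < 1/√(8+8k)`, where `η_k` is the unique root of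
`Δ_k` in the real interval `(0, 1/√(8+8k))`. -/
theorem statement7 (k : ℕ) (hk : 2 ≤ k) (η : ℝ) (hη : IsEta k η) :
    0 < Hh k (rho k) ∧ 0 < Dd k (rho k) ∧
      rho k < η ∧ η < 1 / Real.sqrt (8 + 8 * k) := by
  have hK : (2:ℝ) ≤ (k:ℝ) := by exact_mod_cast hk
  set s : ℝ := 8 + 8 * (k:ℝ) with hs_def
  have hs24 : (24:ℝ) ≤ s := by rw [hs_def]; linarith
  have hs0 : (0:ℝ) < s := by linarith
  set t : ℝ := Real.sqrt s with ht_def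
  have ht0 : 0 ≤ t := Real.sqrt_nonneg s
  have ht2 : t ^ 2 = s := Real.sq_sqrt hs0.le
  have ht4 : 4 < t := by nlinarith
  -- rho facts
  have hrho_eq : rho k = 1 / (1 + t) := rfl
  have heq_b : (1 / t : ℝ) = 1 / Real.sqrt (8 + 8 * (k:ℝ)) := rfl
  clear_value t s
  have h1t : (0:ℝ) < 1 + t := by linarith
  have hrho0 : 0 < rho k := by rw [hrho_eq]; positivity
  set b : ℝ := 1 / t with hb_def
  have hb0 : 0 < b := by rw [hb_def]; positivity
  have hrho_lt_b : rho k < b := by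
    rw [hrho_eq, hb_def]
    apply one_div_lt_one_div_of_lt (by linarith)
    linarith
  have hrho5 : rho k < 1 / 5 := by
    rw [hrho_eq]
    apply one_div_lt_one_div_of_lt (by norm_num)
    linarith
  have hb2 : b ^ 2 = 1 / s := by
    rw [hb_def, div_pow, one_pow, ht2]
  have hrho_sq : (rho k) ^ 2 ≤ 1 / s := by
    rw [← hb2]
    nlinarith [hrho0, hrho_lt_b, hb0]
  -- h(rho) > 0
  have hkey_rho : Cc k * (rho k) ^ (2 * k + 1) ≤ (1/4) * (rho k) ^ 3 := by
    have := key k hk hrho0.le (by rw [← hs_def]; exact hrho_sq)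
    exact this
  have hH : 0 < Hh k (rho k) := by
    unfold Hh
    have h3 : (rho k) ^ 3 < (1/5) ^ 3 := by
      apply pow_lt_pow_left₀ hrho5 hrho0.le
      norm_num
    nlinarith [hkey_rho, hrho5, hrho0]
  -- Pp(rho) = 0
  have hPp : Pp k (rho k) = 0 := by
    unfold Pp
    rw [hrho_eq]
    have h78 : (7 : ℝ) + 8 * (k:ℝ) = s - 1 := by rw [hs_def]; ring
    rw [h78]
    field_simp
    nlinarith [ht2]
  -- Dd(rho) > 0
  have hD : 0 < Dd k (rho k) := by
    unfold Dd
    rw [hPp]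
    have hCp := Cc_pos k
    have hpow : 0 < (rho k) ^ (2 * k + 1) := by positivity
    nlinarith [mul_pos (mul_pos (by linarith : (0:ℝ) < 4 * Cc k) hpow) hH]
  -- Dd(b) < 0
  have hDb : Dd k b < 0 := by
    clear hη hD hPp hH hkey_rho hrho_sq hrho5 hrho_lt_b hrho0 hrho_eq h1t hK
    have hkey_b : Cc k * b ^ (2 * k + 1) ≤ (1/4) * b ^ 3 := by
      apply key k hk hb0.le
      rw [← hs_def, hb2]
    have hCp := Cc_pos k
    have hpowb : 0 < b ^ (2 * k + 1) := pow_pos hb0 _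
    have hHb : Hh k b ≤ 1 := by
      unfold Hh
      linarith [mul_pos hCp hpowb, hb0]
    have hterm : 4 * Cc k * b ^ (2 * k + 1) * Hh k b ≤ b ^ 3 := by
      calc 4 * Cc k * b ^ (2 * k + 1) * Hh k b ≤ 4 * Cc k * b ^ (2 * k + 1) * 1 :=
            mul_le_mul_of_nonneg_left hHb
              (mul_pos (mul_pos (by norm_num : (0:ℝ) < 4) hCp) hpowb).le
        _ = 4 * (Cc k * b ^ (2 * k + 1)) := by ring
        _ ≤ 4 * ((1/4) * b ^ 3) := by linarith
        _ = b ^ 3 := by ring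
    have hPb : Pp k b = 1 / s - 2 / t := by
      unfold Pp
      have h78 : (7 : ℝ) + 8 * (k:ℝ) = s - 1 := by rw [hs_def]; ring
      rw [h78, hb_def, div_pow, one_pow, ht2]
      field_simp
      ring
    have hb3 : b ^ 3 = 1 / t ^ 3 := by rw [hb_def]; ring
    have hfinal : 1 / s - 2 / t + 1 / t ^ 3 < 0 := by
      have hnum : t - 2 * t ^ 2 + 1 < 0 := by
        nlinarith [mul_pos (by linarith : (0:ℝ) < t - 4) (by linarith : (0:ℝ) < t)]
      have heq : 1 / s - 2 / t + 1 / t ^ 3 = (t - 2 * t ^ 2 + 1) / t ^ 3 := by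
        rw [← ht2]
        field_simp
      rw [heq]
      exact div_neg_of_neg_of_pos hnum (by positivity)
    unfold Dd
    rw [hPb]
    linarith [hterm, hb3, hfinal]
  -- IVT
  have hcont : Continuous (Dd k) := by
    unfold Dd Pp Hh
    fun_prop
  have hivt : ∃ x ∈ Set.Ioo (rho k) b, Dd k x = 0 := by
    have h := intermediate_value_Ioo' hrho_lt_b.le hcont.continuousOn
    have h0 : (0:ℝ) ∈ Set.Ioo (Dd k b) (Dd k (rho k)) := ⟨hDb, hD⟩
    obtain ⟨x, hx, hx0⟩ := h h0
    exact ⟨x, hx, hx0⟩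
  obtain ⟨x, hx_mem, hx_eq⟩ := hivt
  have hx_eta : x = η := by
    apply hη.2.2 x _ hx_eq
    rw [← heq_b]
    exact ⟨lt_trans hrho0 hx_mem.1, hx_mem.2⟩
  refine ⟨hH, hD, ?_, ?_⟩
  · rw [← hx_eta]; exact hx_mem.1
  · rw [heq_b]; exact hη.1.2
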